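/- tan(2π/7) + 4·sin(2π/7) − 4·sin(π/7) = √7. -/

import Mathlib

theorem stmt13 : Real.tan (2*Real.pi/7) + 4*Real.sin (2*Real.pi/7) - 4*Real.sin (Real.pi/7) = Real.sqrt 7 := by
  have hpi := Real.pi_pos
  set t : ℝ := Real.pi / 7 with ht_def
  have ht0 : 0 < t := by positivity
  have htlt : t < Real.pi / 2 := by rw [ht_def]; linarith
  set c : ℝ := Real.cos t with hc_def
  set s : ℝ := Real.sin t with hs_def
  have hs2 : s ^ 2 = 1 - c ^ 2 := by
    rw [hs_def, hc_def, Real.sin_sq]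
  have hcpos : 0 < c := Real.cos_pos_of_mem_Ioo ⟨by linarith, htlt⟩
  have hspos : 0 < s := Real.sin_pos_of_pos_of_lt_pi ht0 (by linarith)
  have hcos2 : Real.cos (2 * t) = 2 * c ^ 2 - 1 := Real.cos_two_mul t
  have hcos2pos : 0 < Real.cos (2 * t) :=
    Real.cos_pos_of_mem_Ioo ⟨by linarith, by rw [ht_def]; linarith⟩
  have hc2pos : 0 < 2 * c ^ 2 - 1 := by rw [← hcos2]; exact hcos2pos
  -- cubic relation for c = cos(π/7)
  have h4 : Real.cos (4 * t) = - Real.cos (3 * t) := by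
    have h : (4 : ℝ) * t = Real.pi - 3 * t := by rw [ht_def]; ring
    rw [h, Real.cos_pi_sub]
  have h4' : Real.cos (4 * t) = 2 * (2 * c ^ 2 - 1) ^ 2 - 1 := by
    have : (4 : ℝ) * t = 2 * (2 * t) := by ring
    rw [this, Real.cos_two_mul, hcos2]
  have h3' : Real.cos (3 * t) = 4 * c ^ 3 - 3 * c := Real.cos_three_mul t
  have hfac : (c + 1) * (8 * c ^ 3 - 4 * c ^ 2 - 4 * c + 1) = 0 := by
    have := h4
    rw [h4', h3'] at this
    nlinarith [this]
  have hcub : 8 * c ^ 3 - 4 * c ^ 2 - 4 * c + 1 = 0 := by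
    have hne : c + 1 ≠ 0 := by positivity
    exact (mul_eq_zero.mp hfac).resolve_left hne
  -- key identity: 2sc + 2s = √7 (2c² − 1)
  have hsq : (2 * s * c + 2 * s) ^ 2 = 7 * (2 * c ^ 2 - 1) ^ 2 := by
    nlinarith [hcub, hs2]
  have hkey : 2 * s * c + 2 * s = Real.sqrt 7 * (2 * c ^ 2 - 1) := by
    have h1 : Real.sqrt 7 * (2 * c ^ 2 - 1) = Real.sqrt (7 * (2 * c ^ 2 - 1) ^ 2) := by
      rw [Real.sqrt_mul (by norm_num), Real.sqrt_sq hc2pos.le]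
    rw [h1, ← hsq, Real.sqrt_sq (by positivity)]
  have hsin2 : Real.sin (2 * t) = 2 * s * c := Real.sin_two_mul t
  have htan : Real.tan (2 * t) = (2 * s * c) / (2 * c ^ 2 - 1) := by
    rw [Real.tan_eq_sin_div_cos, hsin2, hcos2]
  have h2t : 2 * Real.pi / 7 = 2 * t := by rw [ht_def]; ring
  rw [h2t, htan, hsin2]
  rw [div_add' _ _ _ hc2pos.ne', div_sub' hc2pos.ne']
  rw [div_eq_iff hc2pos.ne']
  nlinarith [hkey, hcub, hspos]
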